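/- For matrices J, R ∈ ℂ^{n×n} with R Hermitian positive semi-definite and J skew-Hermitian, and m ∈ ℕ, the condition ∑_{j=0}^m J^j R (J^H)^j > 0 (positive definite) holds if and only if the Kalman rank condition rank[R, JR, ..., J^m R] = n holds. -/

import Mathlib

open scoped Matrix ComplexOrder

/-- Lemma 2.2 (B3) ↔ (B1): for `R` Hermitian positive semi-definite and `J`
skew-Hermitian, `∑_{j=0}^m J^j R (Jᴴ)^j` is positive definite iff the Kalman
rank condition `rank [R, JR, …, J^m R] = n` holds. -/
theorem stmt_0 {n : ℕ} (J R : Matrix (Fin n) (Fin n) ℂ) (m : ℕ)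
    (hR : R.PosSemidef) (hJ : Jᴴ = -J) :
    (∑ j ∈ Finset.range (m + 1), J ^ j * R * (Jᴴ) ^ j).PosDef ↔
      (Matrix.of fun (i : Fin n) (p : Fin (m + 1) × Fin n) =>
        (J ^ (p.1 : ℕ) * R) i p.2).rank = n := by
  classical
  set K : Matrix (Fin n) (Fin (m + 1) × Fin n) ℂ :=
    Matrix.of fun (i : Fin n) (p : Fin (m + 1) × Fin n) => (J ^ (p.1 : ℕ) * R) i p.2 with hKdef
  have hKmul : ∀ x : Fin n → ℂ,
      (Kᴴ *ᵥ x = 0 ↔ ∀ j : Fin (m + 1), R *ᵥ ((J ^ (j : ℕ))ᴴ *ᵥ x) = 0) := by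
    intro x
    have hentry : ∀ (j : Fin (m + 1)) (k : Fin n),
        (Kᴴ *ᵥ x) (j, k) = (R *ᵥ ((J ^ (j : ℕ))ᴴ *ᵥ x)) k := by
      intro j k
      have : (R *ᵥ ((J ^ (j : ℕ))ᴴ *ᵥ x)) k = ((J ^ (j : ℕ) * R)ᴴ *ᵥ x) k := by
        rw [Matrix.conjTranspose_mul, ← Matrix.mulVec_mulVec, hR.isHermitian.eq]
      rw [this]
      simp [K, Matrix.mulVec, dotProduct, Matrix.conjTranspose_apply]
    constructor
    · intro h j
      funext k
      rw [← hentry j k, h]; rfl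
    · intro h
      funext p
      obtain ⟨j, k⟩ := p
      rw [hentry j k, h j]; rfl
  have htermq : ∀ (j : ℕ) (x : Fin n → ℂ),
      star x ⬝ᵥ (J ^ j * R * (Jᴴ) ^ j) *ᵥ x
        = star ((J ^ j)ᴴ *ᵥ x) ⬝ᵥ R *ᵥ ((J ^ j)ᴴ *ᵥ x) := by
    intro j x
    rw [Matrix.conjTranspose_pow, ← Matrix.mulVec_mulVec, ← Matrix.mulVec_mulVec,
      Matrix.dotProduct_mulVec (star x), Matrix.star_mulVec]
    simp [Matrix.conjTranspose_pow]
  have hquad : ∀ x : Fin n → ℂ,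
      star x ⬝ᵥ (∑ j ∈ Finset.range (m + 1), J ^ j * R * (Jᴴ) ^ j) *ᵥ x
        = ∑ j ∈ Finset.range (m + 1),
            star ((J ^ j)ᴴ *ᵥ x) ⬝ᵥ R *ᵥ ((J ^ j)ᴴ *ᵥ x) := by
    intro x
    induction (m + 1) with
    | zero => simp
    | succ k ih =>
        rw [Finset.sum_range_succ, Finset.sum_range_succ, Matrix.add_mulVec,
          dotProduct_add, ih, htermq]
  have hterm : ∀ j ∈ Finset.range (m + 1), (J ^ j * R * (Jᴴ) ^ j).PosSemidef := by
    intro j _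
    rw [← Matrix.conjTranspose_pow]
    exact hR.mul_mul_conjTranspose_same (J ^ j)
  have hPSD : (∑ j ∈ Finset.range (m + 1), J ^ j * R * (Jᴴ) ^ j).PosSemidef :=
    Finset.sum_induction _ _ (fun a b ha hb => ha.add hb) (Matrix.PosSemidef.zero) hterm
  -- rank condition via kernel of Kᴴ
  have hrank : K.rank = n ↔ ∀ x : Fin n → ℂ, Kᴴ *ᵥ x = 0 → x = 0 := by
    rw [← K.rank_conjTranspose, Matrix.rank]
    have hfr := LinearMap.finrank_range_add_finrank_ker (Kᴴ).mulVecLin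
    rw [Module.finrank_fintype_fun_eq_card, Fintype.card_fin] at hfr
    constructor
    · intro hr x hx
      have hker : LinearMap.ker (Kᴴ).mulVecLin = ⊥ := by
        have : Module.finrank ℂ (LinearMap.ker (Kᴴ).mulVecLin) = 0 := by omega
        exact Submodule.finrank_eq_zero.mp this
      exact (LinearMap.ker_eq_bot'.mp hker) x hx
    · intro h
      have hker : LinearMap.ker (Kᴴ).mulVecLin = ⊥ :=
        LinearMap.ker_eq_bot'.mpr fun x hx => h x hx
      rw [hker, finrank_bot] at hfr
      omega
  rw [hrank]
  constructor
  · intro hPD x hx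
    by_contra hxne
    have := hPD.dotProduct_mulVec_pos hxne
    rw [hquad x] at this
    have hzero : ∑ j ∈ Finset.range (m + 1),
        star ((J ^ j)ᴴ *ᵥ x) ⬝ᵥ R *ᵥ ((J ^ j)ᴴ *ᵥ x) = 0 := by
      refine Finset.sum_eq_zero fun j hj => ?_
      have := (hKmul x).mp hx ⟨j, Finset.mem_range.mp hj⟩
      simp only at this
      rw [this, dotProduct_zero]
    rw [hzero] at this
    exact lt_irrefl _ this
  · intro h
    refine Matrix.PosDef.of_dotProduct_mulVec_pos hPSD.isHermitian fun x hx => ?_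
    refine lt_of_le_of_ne (hPSD.dotProduct_mulVec_nonneg x) ?_
    intro heq
    apply hx
    apply h x
    rw [hKmul x]
    intro j
    have hsum0 : ∑ j ∈ Finset.range (m + 1),
        star ((J ^ j)ᴴ *ᵥ x) ⬝ᵥ R *ᵥ ((J ^ j)ᴴ *ᵥ x) = 0 := by
      rw [← hquad x, ← heq]
    have hnonneg : ∀ j ∈ Finset.range (m + 1),
        0 ≤ star ((J ^ j)ᴴ *ᵥ x) ⬝ᵥ R *ᵥ ((J ^ j)ᴴ *ᵥ x) := fun j _ => hR.dotProduct_mulVec_nonneg _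
    have := (Finset.sum_eq_zero_iff_of_nonneg hnonneg).mp hsum0 (j : ℕ)
      (Finset.mem_range.mpr j.isLt)
    exact (hR.dotProduct_mulVec_zero_iff _).mp this
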